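/- Let I be a finite index set, J ⊆ I, 𝒢 an additively written abelian group, M = (M_{ij})_{i,j∈I} an integer matrix admitting a skew-symmetrizer (a diagonal integer matrix D = diag(d_i) with d_i > 0 and MD = −(MD)^T), and d : I → 𝒢 with Σ_{i∈I} M_{ij}·d_i = 0 for all j ∈ J. Define the mutation of the graded seed (M,d) at k ∈ J as the pair (μ_k(M), μ_k(d)), where μ_k(d)_i = d_i for i ≠ k and μ_k(d)_k = −d_k + Σ_{i∈I} max(M_{ik},0)·d_i. Then for every finite sequence k_1, …, k_s of indices in J, the pair (M', d') obtained by successively mutating (M,d) at k_1, …, k_s again satisfies Σ_{i∈I} M'_{ij}·d'_i = 0 for all j ∈ J. (This is the content of the homogeneity criterion: if the initial seed of a 𝒢-graded cluster algebra satisfies the degree-kernel condition, then every seed mutation-equivalent to it does, so all cluster variables are homogeneous.) -/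

import Mathlib

/-- Matrix mutation in direction `k`. -/
def matrixMutation {I : Type*} [DecidableEq I] (M : I → I → ℤ) (k : I) : I → I → ℤ :=
  fun i j =>
    if k = i ∨ k = j then -M i j
    else M i j + max (M i k) 0 * max (M k j) 0 - max (-M i k) 0 * max (-M k j) 0

/-- Mutation of the degree function of a graded seed at direction `k`. -/
def degreeMutation {I : Type*} [Fintype I] [DecidableEq I] {G : Type*} [AddCommGroup G]
    (M : I → I → ℤ) (d : I → G) (k : I) : I → G :=
  fun i => if i = k then -d k + ∑ i', max (M i' k) 0 • d i' else d i

/-- Mutation of a graded seed `(M, d)` at direction `k`. -/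
def gradedSeedMutation {I : Type*} [Fintype I] [DecidableEq I] {G : Type*} [AddCommGroup G]
    (p : (I → I → ℤ) × (I → G)) (k : I) : (I → I → ℤ) × (I → G) :=
  (matrixMutation p.1 k, degreeMutation p.1 p.2 k)

private lemma max_mul_pos' (a c : ℤ) (hc : 0 < c) : max a 0 * c = max (a * c) 0 := by
  rw [max_mul_of_nonneg _ _ hc.le, zero_mul]

private lemma maxid' (a b : ℤ) :
    max a 0 * max b 0 - max (-a) 0 * max (-b) 0 = max (-b) 0 * a + b * max a 0 := by
  rcases le_total a 0 with h | h <;> rcases le_total b 0 with h' | h'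
  · rw [max_eq_right h, max_eq_right h', max_eq_left (neg_nonneg.mpr h),
      max_eq_left (neg_nonneg.mpr h')]; ring
  · rw [max_eq_right h, max_eq_left h', max_eq_left (neg_nonneg.mpr h),
      max_eq_right (neg_nonpos.mpr h')]; ring
  · rw [max_eq_left h, max_eq_right h', max_eq_right (neg_nonpos.mpr h),
      max_eq_left (neg_nonneg.mpr h')]; ring
  · rw [max_eq_left h, max_eq_left h', max_eq_right (neg_nonpos.mpr h),
      max_eq_right (neg_nonpos.mpr h')]; ring

private lemma skew_mut' {I : Type*} [DecidableEq I] (M : I → I → ℤ) (k : I)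
    (d0 : I → ℤ) (hpos : ∀ i, 0 < d0 i) (hM : ∀ i j, M i j * d0 j = -(M j i * d0 i)) :
    ∀ i j, matrixMutation M k i j * d0 j = -(matrixMutation M k j i * d0 i) := by
  intro i j
  unfold matrixMutation
  by_cases h : k = i ∨ k = j
  · rw [if_pos h, if_pos h.symm]
    linear_combination -hM i j
  · push_neg at h
    obtain ⟨hki, hkj⟩ := h
    rw [if_neg (by tauto), if_neg (by tauto)]
    have E1 : max (M i k) 0 * d0 k = max (-M k i) 0 * d0 i := by
      rw [max_mul_pos' _ _ (hpos k), max_mul_pos' _ _ (hpos i), neg_mul, hM i k]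
    have E2 : max (-M i k) 0 * d0 k = max (M k i) 0 * d0 i := by
      rw [max_mul_pos' _ _ (hpos k), max_mul_pos' _ _ (hpos i), neg_mul, hM i k, neg_neg]
    have E3 : max (M k j) 0 * d0 j = max (-M j k) 0 * d0 k := by
      rw [max_mul_pos' _ _ (hpos j), max_mul_pos' _ _ (hpos k), neg_mul, hM k j]
    have E4 : max (-M k j) 0 * d0 j = max (M j k) 0 * d0 k := by
      rw [max_mul_pos' _ _ (hpos j), max_mul_pos' _ _ (hpos k), neg_mul, hM k j, neg_neg]
    have key : (M i j + max (M i k) 0 * max (M k j) 0 - max (-M i k) 0 * max (-M k j) 0)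
          * d0 j * d0 k
        = -((M j i + max (M j k) 0 * max (M k i) 0 - max (-M j k) 0 * max (-M k i) 0)
          * d0 i) * d0 k := by
      linear_combination d0 k * hM i j + max (M i k) 0 * d0 k * E3
        + max (-M j k) 0 * d0 k * E1 - max (-M i k) 0 * d0 k * E4
        - max (M j k) 0 * d0 k * E2
    exact mul_right_cancel₀ (hpos k).ne' key

private lemma ker_mut' {I : Type*} [Fintype I] [DecidableEq I] {G : Type*} [AddCommGroup G]
    (M : I → I → ℤ) (J : Set I) (d : I → G) (k : I) (hk : k ∈ J)
    (d0 : I → ℤ) (hpos : ∀ i, 0 < d0 i) (hM : ∀ i j, M i j * d0 j = -(M j i * d0 i))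
    (hker : ∀ j ∈ J, ∑ i, M i j • d i = 0) :
    ∀ j ∈ J, ∑ i, matrixMutation M k i j • degreeMutation M d k i = 0 := by
  intro j hj
  have hMkk : M k k = 0 := by
    have h := hM k k
    have h2 : M k k * d0 k = 0 := by linarith
    exact (mul_eq_zero.mp h2).resolve_right (hpos k).ne'
  by_cases hjk : j = k
  · subst hjk
    have hpt : ∀ i, matrixMutation M j i j • degreeMutation M d j i = -(M i j • d i) := by
      intro i
      by_cases hik : i = j
      · subst hik; simp [matrixMutation, hMkk]
      · have h1 : matrixMutation M j i j = -M i j := by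
          simp [matrixMutation]
        have h2 : degreeMutation M d j i = d i := by
          simp [degreeMutation, hik]
        rw [h1, h2, neg_smul]
    rw [Finset.sum_congr rfl (fun i _ => hpt i), ← neg_zero]
    rw [← hker j hj, Finset.sum_neg_distrib]
  · set T : G := ∑ i', max (M i' k) 0 • d i' with hT
    rw [Fintype.sum_eq_add_sum_compl k]
    have hfirst : matrixMutation M k k j • degreeMutation M d k k
        = (-M k j) • (-d k + T) := by
      have h1 : matrixMutation M k k j = -M k j := by simp [matrixMutation]
      have h2 : degreeMutation M d k k = -d k + T := by simp [degreeMutation, hT]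
      rw [h1, h2]
    have hterm : ∀ i ∈ ({k}ᶜ : Finset I), matrixMutation M k i j • degreeMutation M d k i
        = M i j • d i + max (-M k j) 0 • (M i k • d i) + M k j • (max (M i k) 0 • d i) := by
      intro i hi
      have hik : i ≠ k := by simpa using hi
      have h2 : degreeMutation M d k i = d i := by simp [degreeMutation, hik]
      have h1 : matrixMutation M k i j
          = M i j + (max (-M k j) 0 * M i k + M k j * max (M i k) 0) := by
        unfold matrixMutation
        rw [if_neg (by tauto), add_sub_assoc, maxid']
      rw [h1, h2, add_smul, add_smul, mul_smul, mul_smul, add_assoc]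
    rw [Finset.sum_congr rfl hterm]
    simp only [Finset.sum_add_distrib, ← Finset.smul_sum]
    have S1 : ∑ i ∈ ({k}ᶜ : Finset I), M i j • d i = -(M k j • d k) := by
      have h := hker j hj
      rw [Fintype.sum_eq_add_sum_compl k] at h
      exact eq_neg_of_add_eq_zero_right h
    have S2 : ∑ i ∈ ({k}ᶜ : Finset I), M i k • d i = 0 := by
      have h := hker k hk
      rw [Fintype.sum_eq_add_sum_compl k] at h
      simpa [hMkk] using h
    have S3 : ∑ i ∈ ({k}ᶜ : Finset I), max (M i k) 0 • d i = T := by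
      have h : T = max (M k k) 0 • d k + ∑ i ∈ ({k}ᶜ : Finset I), max (M i k) 0 • d i :=
        Fintype.sum_eq_add_sum_compl k _
      simpa [hMkk] using h.symm
    rw [hfirst, S1, S2, S3, smul_zero]
    module

private theorem degree_kernel_aux {I : Type*} [Fintype I] [DecidableEq I] {G : Type*}
    [AddCommGroup G] (J : Set I) :
    ∀ (ks : List I) (M : I → I → ℤ) (d : I → G),
      (∃ d0 : I → ℤ, (∀ i, 0 < d0 i) ∧ ∀ i j, M i j * d0 j = -(M j i * d0 i)) →
      (∀ j ∈ J, ∑ i, M i j • d i = 0) →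
      (∀ k ∈ ks, k ∈ J) →
      ∀ j ∈ J, ∑ i, (ks.foldl gradedSeedMutation (M, d)).1 i j •
        (ks.foldl gradedSeedMutation (M, d)).2 i = 0
  | [], M, d, _, hker, _ => by simpa using hker
  | k :: ks, M, d, ⟨d0, hpos, hM⟩, hker, hks => by
      simp only [List.foldl_cons]
      exact degree_kernel_aux J ks (matrixMutation M k) (degreeMutation M d k)
        ⟨d0, hpos, skew_mut' M k d0 hpos hM⟩
        (ker_mut' M J d k (hks k (List.mem_cons_self (a := k) (l := ks))) d0 hpos hM hker)
        (fun k' h => hks k' (List.mem_cons_of_mem _ h))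

/-- Homogeneity criterion for graded cluster algebras: if a skew-symmetrizable graded seed
`(M, d)` satisfies the degree-kernel condition `∑ i, M i j • d i = 0` for all `j ∈ J`, then so
does any graded seed obtained from it by a finite sequence of mutations at indices in `J`. -/
theorem degree_kernel_preserved_by_mutation_sequence
    {I : Type*} [Fintype I] [DecidableEq I] {G : Type*} [AddCommGroup G]
    (M : I → I → ℤ) (J : Set I) (d : I → G)
    (hD : ∃ d0 : I → ℤ, (∀ i, 0 < d0 i) ∧ ∀ i j, M i j * d0 j = -(M j i * d0 i))
    (hker : ∀ j ∈ J, ∑ i, M i j • d i = 0)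
    (ks : List I) (hks : ∀ k ∈ ks, k ∈ J) :
    ∀ j ∈ J, ∑ i, (ks.foldl gradedSeedMutation (M, d)).1 i j •
      (ks.foldl gradedSeedMutation (M, d)).2 i = 0 := by
  exact degree_kernel_aux J ks M d hD hker hks
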